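/- arXiv:2403.06328 — 3 statements merged into one kernel-verified Lean document; each statement's English description precedes it below -/
import Mathlib

section
/- In a deterministic MDP with rewards r(s) ∈ [0,1] and discount γ ∈ [0,1), if a state-action pair (s,a) satisfies P_{π_β}[Q^{π_β}(s,a) < ∑_{t≥1} γ^{t-1} r(s_t) | s_1 = s] ≤ δ under the behavior policy π_β, and the return distribution is λ-Lipschitz near optimality in the sense Q*(s, a*) - Q*(s, a) ≤ λδ, then a policy π̂ that is (δ, π_β)-good at every state satisfies V*(s₀) - V^{π̂}(s₀) ≤ λδ/(1-γ) for every initial state s₀. -/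
open MeasureTheory

/-- If `π̂` is `(δ, π_β)`-good at every state (the behavior-policy probability that the
discounted return exceeds `Q^{π_β}(s, π̂(s))` is at most `δ`), and the MDP is
`λ`-Lipschitz near optimality (`Q*(s,a*) - Q*(s,a) ≤ λδ` whenever `(s,a)` is
`(δ, π_β)`-good), then `V*(s₀) - V^{π̂}(s₀) ≤ λδ/(1-γ)` for every initial state. -/
theorem good_policy_value_bound
    {S A : Type*} [MeasurableSpace S]
    (γ : ℝ) (hγ0 : 0 ≤ γ) (hγ1 : γ < 1)
    (δ lam : ℝ) (hδ : 0 ≤ δ) (hlam : 0 ≤ lam)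
    (T : S → A → S) (r : S → ℝ) (hr : ∀ s, r s ∈ Set.Icc (0 : ℝ) 1)
    (μ : S → Measure (ℕ → S)) (hμ : ∀ s, IsProbabilityMeasure (μ s))
    (Qbeta : S → A → ℝ)
    (Qstar : S → A → ℝ) (Vstar Vpi : S → ℝ) (astar pihat : S → A)
    (hVQ : ∀ s, Vstar s = Qstar s (astar s))
    (hopt : ∀ s a, Qstar s a ≤ Qstar s (astar s))
    (hQ : ∀ s a, Qstar s a = r s + γ * Vstar (T s a))
    (hVpi : ∀ s, Vpi s = r s + γ * Vpi (T s (pihat s)))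
    (B : ℝ) (hB : ∀ s, |Vstar s| ≤ B ∧ |Vpi s| ≤ B)
    (hgood : ∀ s, μ s {traj : ℕ → S | Qbeta s (pihat s) < ∑' t : ℕ, γ ^ t * r (traj t)}
      ≤ ENNReal.ofReal δ)
    (hLip : ∀ s a,
      μ s {traj : ℕ → S | Qbeta s a < ∑' t : ℕ, γ ^ t * r (traj t)} ≤ ENNReal.ofReal δ →
      Qstar s (astar s) - Qstar s a ≤ lam * δ) :
    ∀ s₀, Vstar s₀ - Vpi s₀ ≤ lam * δ / (1 - γ) := by
  intro s₀
  have hstep : ∀ s, Vstar s - Vpi s ≤ lam * δ + γ * (Vstar (T s (pihat s)) - Vpi (T s (pihat s))) := by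
    intro s
    have h1 := hLip s (pihat s) (hgood s)
    have h2 := hQ s (pihat s)
    have h3 := hVpi s
    have h4 := hVQ s
    nlinarith
  have key : ∀ n s, Vstar s - Vpi s ≤ lam * δ * (∑ i ∈ Finset.range n, γ ^ i) + γ ^ n * (2 * B) := by
    intro n
    induction n with
    | zero =>
      intro s
      have := hB s
      simp only [Finset.range_zero, Finset.sum_empty, pow_zero]
      have h1 := abs_le.mp this.1
      have h2 := abs_le.mp this.2
      linarith
    | succ n ih =>
      intro s
      have h1 := hstep s
      have h2 := ih (T s (pihat s))
      have h3 : γ * (Vstar (T s (pihat s)) - Vpi (T s (pihat s))) ≤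
          γ * (lam * δ * (∑ i ∈ Finset.range n, γ ^ i) + γ ^ n * (2 * B)) :=
        mul_le_mul_of_nonneg_left h2 hγ0
      rw [geom_sum_succ, pow_succ]
      nlinarith
  have hlim : Filter.Tendsto (fun n => lam * δ * (∑ i ∈ Finset.range n, γ ^ i) + γ ^ n * (2 * B))
      Filter.atTop (nhds (lam * δ * (1 - γ)⁻¹ + 0 * (2 * B))) := by
    apply Filter.Tendsto.add
    · exact (hasSum_geometric_of_lt_one hγ0 hγ1).tendsto_sum_nat.const_mul _
    · exact (tendsto_pow_atTop_nhds_zero_of_lt_one hγ0 hγ1).mul_const _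
  have hle := le_of_tendsto_of_tendsto' tendsto_const_nhds hlim (fun n => key n s₀)
  simp only [zero_mul, add_zero] at hle
  calc Vstar s₀ - Vpi s₀ ≤ lam * δ * (1 - γ)⁻¹ := hle
    _ = lam * δ / (1 - γ) := by ring
end

section
/- If the distributional Bellman operator on outcome distributions, defined by (T p)(·|s) = law of φ(s) + γ ψ' with ψ' ~ p(·|s') and s' ~ π_β(·|s), is applied to distributions supported in [0,1]ᵈ with φ(s) ∈ [0,1-γ]ᵈ, then T maps this set of distributions into itself and is a γ-contraction in the supremum (over states) Wasserstein-∞ distance. -/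
open MeasureTheory ENNReal

/-- The `∞`-Wasserstein distance between two measures: infimum over couplings of the
essential supremum of the distance between the coordinates. -/
noncomputable def Winf {E : Type*} [MeasurableSpace E] [EDist E] (μ ν : Measure E) : ℝ≥0∞ :=
  ⨅ c : {c : Measure (E × E) // c.map Prod.fst = μ ∧ c.map Prod.snd = ν},
    essSup (fun pr : E × E => edist pr.1 pr.2) (c : Measure (E × E))

/-- The unit cube `[0,1]^d`. -/
def unitCube (d : ℕ) : Set (Fin d → ℝ) := {f | ∀ i, f i ∈ Set.Icc (0 : ℝ) 1}

/-- The distributional Bellman operator on state-indexed outcome distributions: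
sample `s' ~ κ s`, sample `ψ' ~ p(·|s')`, output `φ(s) + γ ψ'`. -/
noncomputable def Tdist {S : Type*} [MeasurableSpace S] {d : ℕ}
    (γ : ℝ) (φ : S → Fin d → ℝ) (κ : S → Measure S)
    (p : S → Measure (Fin d → ℝ)) (s : S) : Measure (Fin d → ℝ) :=
  (κ s).bind fun s' => (p s').map fun ψ => φ s + γ • ψ

lemma measurableSet_unitCube (d : ℕ) : MeasurableSet (unitCube d) := by
  have : unitCube d = ⋂ i, (fun f : Fin d → ℝ => f i) ⁻¹' Set.Icc (0 : ℝ) 1 := by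
    ext f; simp [unitCube, Set.mem_iInter]
  rw [this]
  exact MeasurableSet.iInter fun i => (measurable_pi_apply i) measurableSet_Icc

lemma map_bind' {α β γ' : Type*} [MeasurableSpace α] [MeasurableSpace β] [MeasurableSpace γ']
    (m : Measure α) (f : α → Measure β) (g : β → γ') (hf : Measurable f) (hg : Measurable g) :
    (m.bind f).map g = m.bind fun a => (f a).map g := by
  ext s hs
  have hf' : Measurable fun a => (f a).map g := (Measure.measurable_map g hg).comp hf
  rw [Measure.map_apply hg hs, Measure.bind_apply (hg hs) hf.aemeasurable,
    Measure.bind_apply hs hf'.aemeasurable]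
  simp_rw [Measure.map_apply hg hs]

lemma winf_T_le {S : Type*} [Fintype S] [MeasurableSpace S] [MeasurableSingletonClass S]
    {d : ℕ} (γ : ℝ) (hγ0 : 0 ≤ γ) (φ : S → Fin d → ℝ) (κ : S → Measure S)
    (p q : S → Measure (Fin d → ℝ)) (s : S)
    (c : S → Measure ((Fin d → ℝ) × (Fin d → ℝ)))
    (hc1 : ∀ t, (c t).map Prod.fst = p t) (hc2 : ∀ t, (c t).map Prod.snd = q t)
    (M : ℝ≥0∞) (hM : ∀ t, ∀ᵐ pr ∂(c t), ENNReal.ofReal γ * edist pr.1 pr.2 ≤ M) :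
    Winf (Tdist γ φ κ p s) (Tdist γ φ κ q s) ≤ M := by
  set g : (Fin d → ℝ) → (Fin d → ℝ) := fun ψ => φ s + γ • ψ with hg
  have mg : Measurable g :=
    (continuous_const.add (continuous_id.const_smul γ)).measurable
  set F : (Fin d → ℝ) × (Fin d → ℝ) → (Fin d → ℝ) × (Fin d → ℝ) := Prod.map g g with hF
  have mF : Measurable F := mg.prodMap mg
  set C : Measure ((Fin d → ℝ) × (Fin d → ℝ)) :=
    (κ s).bind (fun t => (c t).map F) with hC
  have hfst : C.map Prod.fst = Tdist γ φ κ p s := by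
    rw [hC, map_bind' _ _ _ (measurable_of_countable _) measurable_fst]
    unfold Tdist
    congr 1
    funext t
    rw [Measure.map_map measurable_fst mF]
    have h1 : Prod.fst ∘ F = g ∘ Prod.fst := rfl
    rw [h1, ← Measure.map_map mg measurable_fst, hc1]
  have hsnd : C.map Prod.snd = Tdist γ φ κ q s := by
    rw [hC, map_bind' _ _ _ (measurable_of_countable _) measurable_snd]
    unfold Tdist
    congr 1
    funext t
    rw [Measure.map_map measurable_snd mF]
    have h1 : Prod.snd ∘ F = g ∘ Prod.snd := rfl
    rw [h1, ← Measure.map_map mg measurable_snd, hc2]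
  have hWle : Winf (Tdist γ φ κ p s) (Tdist γ φ κ q s) ≤
      essSup (fun pr : (Fin d → ℝ) × (Fin d → ℝ) => edist pr.1 pr.2) C :=
    iInf_le _ (⟨C, hfst, hsnd⟩ : {c : Measure ((Fin d → ℝ) × (Fin d → ℝ)) //
      c.map Prod.fst = Tdist γ φ κ p s ∧ c.map Prod.snd = Tdist γ φ κ q s})
  refine hWle.trans (essSup_le_of_ae_le M ?_)
  have hAmeas : MeasurableSet {pr : (Fin d → ℝ) × (Fin d → ℝ) | M < edist pr.1 pr.2} := by
    exact measurableSet_lt measurable_const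
      (continuous_edist.measurable : Measurable fun pr : (Fin d → ℝ) × (Fin d → ℝ) =>
        edist pr.1 pr.2)
  have edist_affine : ∀ (x y : Fin d → ℝ),
      edist (g x) (g y) = ENNReal.ofReal γ * edist x y := by
    intro x y
    rw [hg]
    rw [edist_dist, edist_dist, dist_add_left, dist_smul₀, Real.norm_eq_abs,
      abs_of_nonneg hγ0, ENNReal.ofReal_mul hγ0]
  have hC0 : C {pr : (Fin d → ℝ) × (Fin d → ℝ) | M < edist pr.1 pr.2} = 0 := by
    rw [hC, Measure.bind_apply hAmeas (measurable_of_countable _).aemeasurable]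
    have hz : ∀ t, ((c t).map F) {pr : (Fin d → ℝ) × (Fin d → ℝ) | M < edist pr.1 pr.2} = 0 := by
      intro t
      rw [Measure.map_apply mF hAmeas]
      have hset : F ⁻¹' {pr : (Fin d → ℝ) × (Fin d → ℝ) | M < edist pr.1 pr.2}
          = {pr : (Fin d → ℝ) × (Fin d → ℝ) | M < ENNReal.ofReal γ * edist pr.1 pr.2} := by
        ext pr
        simp only [Set.mem_preimage, Set.mem_setOf_eq, hF, Prod.map]
        rw [edist_affine]
      rw [hset]
      have h2 := hM t
      rw [Filter.eventually_iff, mem_ae_iff] at h2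
      convert h2 using 2
      ext pr
      simp [not_le]
    simp only [hz, lintegral_zero]
  have hfin : ∀ᵐ pr ∂C, edist pr.1 pr.2 ≤ M := by
    rw [ae_iff]
    refine measure_mono_null ?_ hC0
    intro pr hpr
    exact not_le.mp hpr
  exact hfin

/-- The distributional Bellman operator maps families of probability distributions
supported in `[0,1]^d` (with features in `[0,1-γ]^d`) into themselves, and is a
`γ`-contraction in the supremum-over-states `W∞` distance. -/
theorem distributional_bellman_contraction
    {S : Type*} [Fintype S] [MeasurableSpace S] [MeasurableSingletonClass S] {d : ℕ}
    (γ : ℝ) (hγ0 : 0 ≤ γ) (hγ1 : γ < 1)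
    (φ : S → Fin d → ℝ) (hφ : ∀ s i, φ s i ∈ Set.Icc (0 : ℝ) (1 - γ))
    (κ : S → Measure S) (hκ : ∀ s, IsProbabilityMeasure (κ s))
    (p q : S → Measure (Fin d → ℝ))
    (hp : ∀ s, IsProbabilityMeasure (p s)) (hq : ∀ s, IsProbabilityMeasure (q s))
    (hpc : ∀ s, p s (unitCube d)ᶜ = 0) (hqc : ∀ s, q s (unitCube d)ᶜ = 0) :
    (∀ s, IsProbabilityMeasure (Tdist γ φ κ p s) ∧ Tdist γ φ κ p s (unitCube d)ᶜ = 0) ∧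
    (⨆ s : S, Winf (Tdist γ φ κ p s) (Tdist γ φ κ q s))
      ≤ ENNReal.ofReal γ * ⨆ s : S, Winf (p s) (q s) := by
  constructor
  · -- Part 1
    intro s
    set g : (Fin d → ℝ) → (Fin d → ℝ) := fun ψ => φ s + γ • ψ with hgdef
    have mg : Measurable g :=
      (continuous_const.add (continuous_id.const_smul γ)).measurable
    haveI := hκ s
    haveI : ∀ t, IsProbabilityMeasure ((p t).map g) := fun t => by
      haveI := hp t
      exact Measure.isProbabilityMeasure_map mg.aemeasurable
    constructor
    · constructor
      show Tdist γ φ κ p s Set.univ = 1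
      unfold Tdist
      rw [Measure.bind_apply MeasurableSet.univ (measurable_of_countable _).aemeasurable]
      simp [measure_univ]
    · unfold Tdist
      rw [Measure.bind_apply (measurableSet_unitCube d).compl (measurable_of_countable _).aemeasurable]
      have : ∀ t, ((p t).map g) (unitCube d)ᶜ = 0 := by
        intro t
        rw [Measure.map_apply mg (measurableSet_unitCube d).compl]
        refine measure_mono_null ?_ (hpc t)
        intro ψ hψ
        simp only [Set.mem_preimage, Set.mem_compl_iff] at hψ ⊢
        intro hmem
        apply hψ
        intro i
        have h1 := (hφ s i).1
        have h2 := (hφ s i).2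
        have h3 := (hmem i).1
        have h4 := (hmem i).2
        simp only [hgdef, Pi.add_apply, Pi.smul_apply, smul_eq_mul]
        constructor
        · nlinarith
        · nlinarith
      simp only [← hgdef, this, lintegral_zero]
  · -- Part 2: contraction
    apply iSup_le
    intro s
    set D : ℝ≥0∞ := ⨆ t : S, Winf (p t) (q t) with hD
    by_cases hL : ENNReal.ofReal γ * D = ⊤
    · rw [hL]; exact le_top
    by_cases hγz : γ = 0
    · -- γ = 0: use product couplings
      subst hγz
      simp only [ENNReal.ofReal_zero, zero_mul]
      refine winf_T_le 0 le_rfl φ κ p q s (fun t => (p t).prod (q t)) ?_ ?_ 0 ?_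
      · intro t
        haveI := hp t; haveI := hq t
        rw [Measure.map_fst_prod, measure_univ, one_smul]
      · intro t
        haveI := hp t; haveI := hq t
        rw [Measure.map_snd_prod, measure_univ, one_smul]
      · intro t
        filter_upwards with pr
        simp
    · -- γ > 0
      have hγpos : 0 < γ := lt_of_le_of_ne hγ0 (Ne.symm hγz)
      have hγne : ENNReal.ofReal γ ≠ 0 := by
        simp [ENNReal.ofReal_eq_zero, not_le, hγpos]
      have hDne : D ≠ ⊤ := by
        intro h
        rw [h, ENNReal.mul_top hγne] at hL
        exact hL rfl
      apply ENNReal.le_of_forall_pos_le_add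
      intro ε hε _
      have hεne : (ε : ℝ≥0∞) ≠ 0 := by exact_mod_cast hε.ne'
      have hex : ∀ t : S, ∃ c : {c : Measure ((Fin d → ℝ) × (Fin d → ℝ)) //
          c.map Prod.fst = p t ∧ c.map Prod.snd = q t},
          essSup (fun pr : (Fin d → ℝ) × (Fin d → ℝ) => edist pr.1 pr.2)
            (c : Measure ((Fin d → ℝ) × (Fin d → ℝ))) < D + ε := by
        intro t
        have h1 : Winf (p t) (q t) < D + ε :=
          lt_of_le_of_lt (le_iSup (fun t => Winf (p t) (q t)) t)
            (ENNReal.lt_add_right hDne hεne)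
        exact iInf_lt_iff.mp h1
      choose cc hcc using hex
      have hle : Winf (Tdist γ φ κ p s) (Tdist γ φ κ q s) ≤ ENNReal.ofReal γ * (D + ε) := by
        refine winf_T_le γ hγ0 φ κ p q s (fun t => (cc t : Measure _))
          (fun t => (cc t).2.1) (fun t => (cc t).2.2) _ ?_
        intro t
        filter_upwards [ae_le_essSup (fun pr : (Fin d → ℝ) × (Fin d → ℝ) => edist pr.1 pr.2)]
          with pr hpr
        exact mul_le_mul_right (hpr.trans (hcc t).le) _
      refine hle.trans ?_
      rw [mul_add]
      refine add_le_add_right ?_ _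
      calc ENNReal.ofReal γ * ε ≤ 1 * ε :=
            mul_le_mul_left (ENNReal.ofReal_le_one.mpr hγ1.le) _
        _ = ε := one_mul _
end

section
/- In a deterministic MDP, if an outcome ψ is in the support of the true outcome distribution p₀(·|s) (i.e., achievable from s by some trajectory with dataset coverage of every transition), then there exists an action a and outcome ψ' in the support of p₀(·|T(s,a)) such that ψ = φ(s) + γψ'. -/
/-- States visited when following a (possibly non-stationary) action sequence `u`
from `s` under deterministic dynamics `T`. -/
def seqStates {S A : Type*} (T : S → A → S) (u : ℕ → A) (s : S) : ℕ → S
  | 0 => s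
  | t + 1 => T (seqStates T u s t) (u t)

lemma seqStates_shift {S A : Type*} (T : S → A → S) (u : ℕ → A) (s : S) :
    ∀ t, seqStates T u s (t + 1) = seqStates T (fun n => u (n + 1)) (T s (u 0)) t := by
  intro t
  induction t with
  | zero => rfl
  | succ n ih => simp only [seqStates] at ih ⊢; rw [ih]

lemma summable_aux {d : ℕ} (γ : ℝ) (hγ0 : 0 ≤ γ) (hγ1 : γ < 1)
    (C : ℝ) (f : ℕ → Fin d → ℝ) (hf : ∀ t i, |f t i| ≤ C) :
    Summable (fun t : ℕ => γ ^ t • f t) := by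
  apply Summable.of_norm_bounded (g := fun t => (max C 0) * γ ^ t)
    ((summable_geometric_of_lt_one hγ0 hγ1).mul_left _)
  intro t
  rw [norm_smul, mul_comm]
  apply mul_le_mul
  · rw [pi_norm_le_iff_of_nonneg (le_max_right _ _)]
    intro i
    exact le_trans (hf t i) (le_max_left _ _)
  · simp only [Real.norm_eq_abs, abs_pow, abs_of_nonneg hγ0, le_refl]
  · exact norm_nonneg _
  · exact le_max_right _ _

/-- In a deterministic MDP, every achievable outcome `ψ` from `s` (a discounted
feature sum along some trajectory from `s`) decomposes as `ψ = φ(s) + γ ψ'` for some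
action `a` and some outcome `ψ'` achievable from the successor state `T s a`. -/
theorem achievable_outcome_decomposition
    {S A : Type*} {d : ℕ} (γ : ℝ) (hγ0 : 0 ≤ γ) (hγ1 : γ < 1)
    (T : S → A → S) (φ : S → Fin d → ℝ) (C : ℝ) (hφ : ∀ s i, |φ s i| ≤ C)
    (s : S) (ψ : Fin d → ℝ)
    (hach : ∃ u : ℕ → A, ψ = ∑' t : ℕ, γ ^ t • φ (seqStates T u s t)) :
    ∃ (a : A) (ψ' : Fin d → ℝ),
      (∃ u' : ℕ → A, ψ' = ∑' t : ℕ, γ ^ t • φ (seqStates T u' (T s a) t)) ∧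
      ψ = φ s + γ • ψ' := by
  obtain ⟨u, hu⟩ := hach
  refine ⟨u 0, ∑' t : ℕ, γ ^ t • φ (seqStates T (fun n => u (n + 1)) (T s (u 0)) t),
    ⟨fun n => u (n + 1), rfl⟩, ?_⟩
  have hsum : Summable (fun t : ℕ => γ ^ t • φ (seqStates T u s t)) :=
    summable_aux γ hγ0 hγ1 C _ (fun t i => hφ _ i)
  have hsum' : Summable (fun t : ℕ => γ ^ t • φ (seqStates T (fun n => u (n + 1)) (T s (u 0)) t)) :=
    summable_aux γ hγ0 hγ1 C _ (fun t i => hφ _ i)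
  rw [hu, Summable.tsum_eq_zero_add hsum]
  simp only [pow_zero, one_smul, seqStates]
  congr 1
  have key : ∀ t : ℕ, γ ^ (t + 1) • φ (T (seqStates T u s t) (u t)) =
      γ • (γ ^ t • φ (seqStates T (fun n => u (n + 1)) (T s (u 0)) t)) := by
    intro t
    rw [show T (seqStates T u s t) (u t) = seqStates T u s (t + 1) from rfl,
      seqStates_shift, smul_smul, ← pow_succ']
  rw [tsum_congr key, Summable.tsum_const_smul γ hsum']
end
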